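/- Let u = (5,−5,−2,1,0,1), v = (1,0,1,2,5,−5), u' = (5,−2,−5,0,1,1), v' = (1,1,0,5,2,−5) in ℚ⁶, and set A := u·vᵀ and B := u'·v'ᵀ (6×6 rational matrices). Then A·B = B·A = A² = B² = 0, A and B each have rank 1, and for all nonzero rationals s, t the matrix s·A + t·B has rank 2 and satisfies (s·A + t·B)² = 0. -/

import Mathlib

open Matrix

section Aux

lemma vecMulVec_mulVec_eq (u v x : Fin 6 → ℚ) :
    (vecMulVec u v) *ᵥ x = (v ⬝ᵥ x) • u := by
  funext i
  simp only [mulVec, dotProduct, vecMulVec_apply, Pi.smul_apply, smul_eq_mul]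
  rw [Finset.sum_mul]
  exact Finset.sum_congr rfl (fun j _ => by ring)

lemma vecMulVec_mul_vecMulVec (u v u' v' : Fin 6 → ℚ) :
    vecMulVec u v * vecMulVec u' v' = (v ⬝ᵥ u') • vecMulVec u v' := by
  ext i j
  simp only [mul_apply, vecMulVec_apply, Matrix.smul_apply, dotProduct, smul_eq_mul]
  rw [Finset.sum_mul]
  exact Finset.sum_congr rfl (fun k _ => by ring)

lemma rank_vecMulVec_of_ne_zero {u v : Fin 6 → ℚ} (hu : u ≠ 0) {j : Fin 6}
    (hvj : v j ≠ 0) : (vecMulVec u v).rank = 1 := by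
  have hrange : LinearMap.range (vecMulVec u v).mulVecLin = Submodule.span ℚ {u} := by
    apply le_antisymm
    · rintro y ⟨x, rfl⟩
      rw [mulVecLin_apply, vecMulVec_mulVec_eq]
      exact Submodule.smul_mem _ _ (Submodule.mem_span_singleton_self u)
    · rw [Submodule.span_le, Set.singleton_subset_iff]
      refine ⟨(v j)⁻¹ • (Pi.single j 1 : Fin 6 → ℚ), ?_⟩
      rw [mulVecLin_apply, vecMulVec_mulVec_eq, dotProduct_smul, dotProduct_single,
        mul_one, smul_eq_mul, inv_mul_cancel₀ hvj, one_smul]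
  rw [Matrix.rank, hrange]
  exact finrank_span_singleton hu

end Aux

/-- The rank-one monodromy logarithms at the node `p₁` (eq. (5.10)): each generator is of
type I₁ (rank one, square zero), products vanish, and every interior element
`s·A + t·B` (`s,t ≠ 0`) is of type I₂ (rank two, square zero). -/
theorem stmt_8 (u v u' v' : Fin 6 → ℚ)
    (hu : u = ![5, -5, -2, 1, 0, 1]) (hv : v = ![1, 0, 1, 2, 5, -5])
    (hu' : u' = ![5, -2, -5, 0, 1, 1]) (hv' : v' = ![1, 1, 0, 5, 2, -5])
    (A B : Matrix (Fin 6) (Fin 6) ℚ)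
    (hA : A = vecMulVec u v) (hB : B = vecMulVec u' v') :
    A * B = 0 ∧ B * A = 0 ∧ A * A = 0 ∧ B * B = 0 ∧ A.rank = 1 ∧ B.rank = 1 ∧
      ∀ s t : ℚ, s ≠ 0 → t ≠ 0 →
        (s • A + t • B).rank = 2 ∧ (s • A + t • B) ^ 2 = 0 := by
  have hvu' : v ⬝ᵥ u' = 0 := by
    subst hv hu'; simp [dotProduct, Fin.sum_univ_succ]
  have hv'u : v' ⬝ᵥ u = 0 := by
    subst hv' hu; simp [dotProduct, Fin.sum_univ_succ]
  have hvu : v ⬝ᵥ u = 0 := by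
    subst hv hu; simp [dotProduct, Fin.sum_univ_succ]
  have hv'u' : v' ⬝ᵥ u' = 0 := by
    subst hv' hu'; simp [dotProduct, Fin.sum_univ_succ]
  have hAB : A * B = 0 := by
    rw [hA, hB, vecMulVec_mul_vecMulVec, hvu', zero_smul]
  have hBA : B * A = 0 := by
    rw [hA, hB, vecMulVec_mul_vecMulVec, hv'u, zero_smul]
  have hAA : A * A = 0 := by
    rw [hA, vecMulVec_mul_vecMulVec, hvu, zero_smul]
  have hBB : B * B = 0 := by
    rw [hB, vecMulVec_mul_vecMulVec, hv'u', zero_smul]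
  have hune : u ≠ 0 := by
    subst hu; intro h; have := congrFun h 0; simp at this
  have hu'ne : u' ≠ 0 := by
    subst hu'; intro h; have := congrFun h 0; simp at this
  have hv0 : v 0 = 1 := by subst hv; rfl
  have hv1 : v 1 = 0 := by subst hv; rfl
  have hv'0 : v' 0 = 1 := by subst hv'; rfl
  have hv'1 : v' 1 = 1 := by subst hv'; rfl
  refine ⟨hAB, hBA, hAA, hBB,
    by rw [hA]; exact rank_vecMulVec_of_ne_zero hune (j := 0) (by rw [hv0]; norm_num),
    by rw [hB]; exact rank_vecMulVec_of_ne_zero hu'ne (j := 0) (by rw [hv'0]; norm_num),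
    fun s t hs ht => ?_⟩
  constructor
  · -- rank (s•A + t•B) = 2
    have hmv : ∀ x : Fin 6 → ℚ,
        (s • A + t • B) *ᵥ x = (s * (v ⬝ᵥ x)) • u + (t * (v' ⬝ᵥ x)) • u' := by
      intro x
      rw [add_mulVec, smul_mulVec, smul_mulVec, hA, hB,
        vecMulVec_mulVec_eq, vecMulVec_mulVec_eq, smul_smul, smul_smul]
    have hli : LinearIndependent ℚ ![u, u'] := by
      rw [linearIndependent_fin2]
      refine ⟨hu'ne, fun a ha => ?_⟩
      have := congrFun ha 3
      subst hu hu'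
      simp at this
    have hrange : LinearMap.range (s • A + t • B).mulVecLin
        = Submodule.span ℚ (Set.range ![u, u']) := by
      apply le_antisymm
      · rintro y ⟨x, rfl⟩
        rw [mulVecLin_apply, hmv]
        have humem : u ∈ Submodule.span ℚ (Set.range ![u, u']) :=
          Submodule.subset_span ⟨0, rfl⟩
        have hu'mem : u' ∈ Submodule.span ℚ (Set.range ![u, u']) :=
          Submodule.subset_span ⟨1, rfl⟩
        exact Submodule.add_mem _ (Submodule.smul_mem _ _ humem)
          (Submodule.smul_mem _ _ hu'mem)
      · rw [Submodule.span_le]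
        rintro y ⟨i, rfl⟩
        fin_cases i
        · -- u ∈ range: use x = s⁻¹ • (single 0 1 - single 1 1)
          refine ⟨s⁻¹ • ((Pi.single 0 1 : Fin 6 → ℚ) - (Pi.single 1 1 : Fin 6 → ℚ)), ?_⟩
          rw [mulVecLin_apply, hmv, dotProduct_smul, dotProduct_smul,
            dotProduct_sub, dotProduct_sub, dotProduct_single, dotProduct_single,
            dotProduct_single, dotProduct_single, hv0, hv1, hv'0, hv'1]
          simp [hs]
        · -- u' ∈ range: use x = t⁻¹ • single 1 1
          refine ⟨t⁻¹ • (Pi.single 1 1 : Fin 6 → ℚ), ?_⟩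
          rw [mulVecLin_apply, hmv, dotProduct_smul, dotProduct_smul,
            dotProduct_single, dotProduct_single, hv1, hv'1]
          simp [ht]
    rw [Matrix.rank, hrange, finrank_span_eq_card hli, Fintype.card_fin]
  · -- square zero
    rw [pow_two, add_mul, mul_add, mul_add, smul_mul_smul_comm, smul_mul_smul_comm,
      smul_mul_smul_comm, smul_mul_smul_comm, hAA, hAB, hBA, hBB]
    simp
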